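/- Let (A, A*) be a Leonard pair with E*_i and θ*_i as above. Then for 0 ≤ i, j ≤ d and 0 ≤ r, s ≤ d: E*_i A^r A* A^s E*_j = θ*_{j+s} · E*_i A^{r+s} E*_j if i − j = r + s; E*_i A^r A* A^s E*_j = θ*_{j−s} · E*_i A^{r+s} E*_j if j − i = r + s; and E*_i A^r A* A^s E*_j = 0 if |i−j| > r + s. -/

import Mathlib

section Helpers

variable {K : Type*} [Field K] {n : ℕ}

lemma band_mul {p q : ℕ} {M N : Matrix (Fin n) (Fin n) K}
    (hM : ∀ i j : Fin n, p < Nat.dist i j → M i j = 0)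
    (hN : ∀ i j : Fin n, q < Nat.dist i j → N i j = 0) :
    ∀ i j : Fin n, p + q < Nat.dist i j → (M * N) i j = 0 := by
  intro i j h
  rw [Matrix.mul_apply]
  apply Finset.sum_eq_zero
  intro k _
  by_cases hk : p < Nat.dist (i : ℕ) (k : ℕ)
  · rw [hM i k hk, zero_mul]
  · rw [hN k j ?_, mul_zero]
    have := Nat.dist.triangle_inequality (i : ℕ) (k : ℕ) (j : ℕ)
    omega

lemma pow_band {M : Matrix (Fin n) (Fin n) K}
    (hM : ∀ i j : Fin n, 1 < Nat.dist i j → M i j = 0) (r : ℕ) :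
    ∀ i j : Fin n, r < Nat.dist i j → (M ^ r) i j = 0 := by
  induction r with
  | zero =>
    intro i j h
    have : i ≠ j := by
      intro e; subst e; simp [Nat.dist] at h
    simp [pow_zero, Matrix.one_apply, this]
  | succ m ih =>
    intro i j h
    rw [pow_succ]
    exact band_mul ih hM i j (by omega)

lemma std_sandwich (i j : Fin n) (X : Matrix (Fin n) (Fin n) K) :
    Matrix.single i i 1 * X * Matrix.single j j 1
      = X i j • Matrix.single i j 1 := by
  ext a c
  simp [Matrix.mul_apply, Matrix.single, Finset.sum_ite_eq,
    Finset.sum_ite_eq', ite_and]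
  aesop

lemma entry_forced {M D : Matrix (Fin n) (Fin n) K}
    (hM : ∀ i j : Fin n, 1 < Nat.dist i j → M i j = 0)
    (hD : D.IsDiag) (r s : ℕ) (i j k0 : Fin n)
    (hk0 : ∀ k : Fin n, Nat.dist i k ≤ r → Nat.dist k j ≤ s → k = k0) :
    (M ^ r * D * M ^ s) i j = D k0 k0 * (M ^ (r + s)) i j := by
  have key : ∀ k : Fin n, k ≠ k0 → (M ^ r) i k = 0 ∨ (M ^ s) k j = 0 := by
    intro k hk
    by_cases h1 : Nat.dist (i : ℕ) (k : ℕ) ≤ r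
    · by_cases h2 : Nat.dist (k : ℕ) (j : ℕ) ≤ s
      · exact absurd (hk0 k h1 h2) hk
      · exact Or.inr (pow_band hM s k j (by omega))
    · exact Or.inl (pow_band hM r i k (by omega))
  have hMD : ∀ a c : Fin n, (M ^ r * D) a c = (M ^ r) a c * D c c := by
    intro a c
    rw [Matrix.mul_apply, Finset.sum_eq_single c]
    · intro l _ hl
      rw [hD hl, mul_zero]
    · intro hc; exact absurd (Finset.mem_univ c) hc
  rw [Matrix.mul_apply, pow_add, Matrix.mul_apply,
    Finset.sum_eq_single k0, Finset.sum_eq_single k0, hMD]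
  · ring
  · intro l _ hl
    rcases key l hl with h | h <;> rw [h] <;> ring
  · intro hc; exact absurd (Finset.mem_univ k0) hc
  · intro l _ hl
    rcases key l hl with h | h
    · rw [hMD, h]; ring
    · rw [h, mul_zero]
  · intro hc; exact absurd (Finset.mem_univ k0) hc

lemma toMatrix_pow {V : Type*} [AddCommGroup V] [Module K V]
    (b : Module.Basis (Fin n) K V) (A : Module.End K V) (r : ℕ) :
    LinearMap.toMatrix b b (A ^ r) = (LinearMap.toMatrix b b A) ^ r := by
  induction r with
  | zero =>
    rw [pow_zero, pow_zero]
    exact LinearMap.toMatrix_one b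
  | succ m ih => rw [pow_succ, pow_succ, ← ih, ← LinearMap.toMatrix_mul]

end Helpers

/-- A square matrix is irreducible tridiagonal: nonzero entries lie within
distance one of the diagonal, and all sub- and superdiagonal entries are nonzero. -/
def IsIrreducibleTridiagonal {K : Type*} [Field K] {n : ℕ}
    (M : Matrix (Fin n) (Fin n) K) : Prop :=
  (∀ i j : Fin n, ((i : ℕ) + 1 < j ∨ (j : ℕ) + 1 < i) → M i j = 0) ∧
  (∀ i j : Fin n, ((i : ℕ) + 1 = j ∨ (j : ℕ) + 1 = i) → M i j ≠ 0)

theorem stmt_9 {K V : Type*} [Field K] [AddCommGroup V] [Module K V]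
    (d : ℕ) (A B : Module.End K V)
    (b : Module.Basis (Fin (d + 1)) K V)
    (hA : IsIrreducibleTridiagonal (LinearMap.toMatrix b b A))
    (hB : (LinearMap.toMatrix b b B).IsDiag)
    (hLP : ∃ c : Module.Basis (Fin (d + 1)) K V,
      IsIrreducibleTridiagonal (LinearMap.toMatrix c c B) ∧
      (LinearMap.toMatrix c c A).IsDiag)
    (E : Fin (d + 1) → Module.End K V)
    (hE : ∀ i, E i = Matrix.toLin b b (Matrix.single i i 1))
    (θs : Fin (d + 1) → K)
    (hθs : ∀ i, θs i = LinearMap.toMatrix b b B i i) :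
    ∀ (i j : Fin (d + 1)) (r s : ℕ), r ≤ d → s ≤ d →
      (∀ h : (i : ℕ) = (j : ℕ) + r + s,
        E i * A ^ r * B * A ^ s * E j =
          θs ⟨(j : ℕ) + s, by have := i.isLt; omega⟩ • (E i * A ^ (r + s) * E j)) ∧
      (∀ h : (j : ℕ) = (i : ℕ) + r + s,
        E i * A ^ r * B * A ^ s * E j =
          θs ⟨(j : ℕ) - s, by have := j.isLt; omega⟩ • (E i * A ^ (r + s) * E j)) ∧
      (r + s < Nat.dist i j → E i * A ^ r * B * A ^ s * E j = 0) := by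
  intro i j r s hr hs
  set M := LinearMap.toMatrix b b A with hM
  set D := LinearMap.toMatrix b b B with hD
  have band1 : ∀ a c : Fin (d + 1), 1 < Nat.dist a c → M a c = 0 := by
    intro a c h
    exact hA.1 a c (by simp [Nat.dist] at h; omega)
  have bandD : ∀ a c : Fin (d + 1), 0 < Nat.dist a c → D a c = 0 := by
    intro a c h
    exact hB (by intro e; subst e; simp [Nat.dist] at h)
  have main : ∀ (k0 : Fin (d + 1)),
      (∀ k : Fin (d + 1), Nat.dist i k ≤ r → Nat.dist k j ≤ s → k = k0) →
      E i * A ^ r * B * A ^ s * E j = θs k0 • (E i * A ^ (r + s) * E j) := by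
    intro k0 hk0
    apply (LinearMap.toMatrix b b).injective
    simp only [map_smul, LinearMap.toMatrix_mul, toMatrix_pow, hE,
      LinearMap.toMatrix_toLin, ← hM, ← hD]
    have assoc : Matrix.single i i 1 * M ^ r * D * M ^ s
        * Matrix.single j j 1
        = Matrix.single i i 1 * (M ^ r * D * M ^ s)
        * Matrix.single j j 1 := by
      simp [mul_assoc]
    rw [assoc, std_sandwich, std_sandwich, smul_smul,
      entry_forced band1 hB r s i j k0 hk0, hθs]
  refine ⟨?_, ?_, ?_⟩
  · intro h
    apply main
    intro k h1 h2
    apply Fin.ext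
    simp only [Nat.dist] at h1 h2
    simp only []
    omega
  · intro h
    apply main
    intro k h1 h2
    apply Fin.ext
    simp only [Nat.dist] at h1 h2
    simp only []
    omega
  · intro h
    apply (LinearMap.toMatrix b b).injective
    simp only [map_zero, LinearMap.toMatrix_mul, toMatrix_pow, hE,
      LinearMap.toMatrix_toLin, ← hM, ← hD]
    have assoc : Matrix.single i i 1 * M ^ r * D * M ^ s
        * Matrix.single j j 1
        = Matrix.single i i 1 * (M ^ r * D * M ^ s)
        * Matrix.single j j 1 := by
      simp [mul_assoc]
    rw [assoc, std_sandwich]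
    have hz : (M ^ r * D * M ^ s) i j = 0 :=
      band_mul (band_mul (pow_band band1 r) bandD) (pow_band band1 s) i j (by omega)
    rw [hz, zero_smul]
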